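/- For every positive integer n and all real numbers m, r such that none of the cosines cos(2^{-p} m), cos(2^{-p} r), cos(2^{-1-p} m), cos(2^{-1-p} r) for 0 ≤ p ≤ n vanish and tan(m), tan(r), tan(2^{-1-n} m), tan(2^{-1-n} r) are defined and nonzero, one has ∏_{p=0}^{n} [cos(2^{-p} m)/cos(2^{-p} r)] · [cos(2^{-1-p} r)/cos(2^{-1-p} m)]² = tan(2^{-1-n} m)·tan(r) / (tan(m)·tan(2^{-1-n} r)). -/

import Mathlib

open Real Finset

lemma half_step (y : ℝ) (h1 : Real.cos (2*y) ≠ 0) (h2 : Real.cos y ≠ 0)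
    (hsy : Real.sin y ≠ 0) :
    Real.cos (2*y) / (Real.cos y)^2 = 2 * Real.tan y / Real.tan (2*y) := by
  have h3 : Real.sin (2*y) ≠ 0 := by
    rw [Real.sin_two_mul]; positivity
  rw [Real.tan_eq_sin_div_cos, Real.tan_eq_sin_div_cos, Real.sin_two_mul]
  field_simp

lemma pow_rel (p : ℕ) (m : ℝ) :
    (2:ℝ)^(-(p:ℤ)) * m = 2 * ((2:ℝ)^(-1-(p:ℤ)) * m) := by
  rw [show (-(p:ℤ)) = 1 + (-1-(p:ℤ)) by ring,
    zpow_add₀ (by norm_num : (2:ℝ) ≠ 0), zpow_one]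
  ring

lemma aux_prod (n : ℕ) (m : ℝ)
    (hc : ∀ p : ℕ, p ≤ n →
      Real.cos ((2:ℝ)^(-(p:ℤ)) * m) ≠ 0 ∧ Real.cos ((2:ℝ)^(-1-(p:ℤ)) * m) ≠ 0)
    (hs : Real.sin ((2:ℝ)^(-1-(n:ℤ)) * m) ≠ 0) :
    ∏ p ∈ Finset.range (n+1),
      Real.cos ((2:ℝ)^(-(p:ℤ)) * m) / (Real.cos ((2:ℝ)^(-1-(p:ℤ)) * m))^2
    = 2^(n+1) * Real.tan ((2:ℝ)^(-1-(n:ℤ)) * m) / Real.tan m := by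
  induction n with
  | zero =>
      rw [Finset.prod_range_one, pow_rel 0 m,
        half_step _ (by rw [← pow_rel 0 m]; exact (hc 0 le_rfl).1) ((hc 0 le_rfl).2) hs,
        ← pow_rel 0 m]
      norm_num
  | succ k ih =>
      have hck : ∀ p : ℕ, p ≤ k →
          Real.cos ((2:ℝ)^(-(p:ℤ)) * m) ≠ 0 ∧ Real.cos ((2:ℝ)^(-1-(p:ℤ)) * m) ≠ 0 :=
        fun p hp => hc p (hp.trans (Nat.le_succ k))
      have hrel : (2:ℝ)^(-1-(k:ℤ)) * m = 2 * ((2:ℝ)^(-1-((k+1:ℕ):ℤ)) * m) := by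
        have := pow_rel (k+1) m
        have h2 : -((k+1:ℕ):ℤ) = -1-(k:ℤ) := by push_cast; ring
        rw [h2] at this
        exact this
      have hcK : Real.cos ((2:ℝ)^(-1-((k+1:ℕ):ℤ)) * m) ≠ 0 := (hc (k+1) le_rfl).2
      have hsk : Real.sin ((2:ℝ)^(-1-(k:ℤ)) * m) ≠ 0 := by
        rw [hrel, Real.sin_two_mul]; positivity
      have hcck : Real.cos ((2:ℝ)^(-1-(k:ℤ)) * m) ≠ 0 := (hc k (Nat.le_succ k)).2
      have htk : Real.tan ((2:ℝ)^(-1-(k:ℤ)) * m) ≠ 0 := by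
        rw [Real.tan_eq_sin_div_cos]
        exact div_ne_zero hsk hcck
      rw [Finset.prod_range_succ, ih hck hsk]
      have hfac : Real.cos ((2:ℝ)^(-((k+1:ℕ):ℤ)) * m) /
          (Real.cos ((2:ℝ)^(-1-((k+1:ℕ):ℤ)) * m))^2
          = 2 * Real.tan ((2:ℝ)^(-1-((k+1:ℕ):ℤ)) * m) / Real.tan ((2:ℝ)^(-1-(k:ℤ)) * m) := by
        have h2 : -((k+1:ℕ):ℤ) = -1-(k:ℤ) := by push_cast; ring
        rw [pow_rel (k+1) m, half_step _ (by rw [← pow_rel (k+1) m]; exact (hc (k+1) le_rfl).1)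
          hcK hs, ← pow_rel (k+1) m, h2]
      have hcancel : ∀ (a b t c : ℝ), t ≠ 0 → a * t / c * (b / t) = a * b / c := by
        intro a b t c ht
        rw [div_eq_mul_inv, div_eq_mul_inv, div_eq_mul_inv,
          show a * t * c⁻¹ * (b * t⁻¹) = a * b * c⁻¹ * (t * t⁻¹) by ring,
          mul_inv_cancel₀ ht, mul_one]
      rw [hfac, show (2:ℝ) * Real.tan ((2:ℝ)^(-1-((k+1:ℕ):ℤ)) * m) / Real.tan ((2:ℝ)^(-1-(k:ℤ)) * m)
          = (2 * Real.tan ((2:ℝ)^(-1-((k+1:ℕ):ℤ)) * m)) / Real.tan ((2:ℝ)^(-1-(k:ℤ)) * m) from rfl,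
        hcancel _ _ _ _ htk]
      rw [pow_succ]
      ring

theorem product_cos_ratio_tan_ratio (n : ℕ) (hn : 0 < n) (m r : ℝ)
    (hc : ∀ p : ℕ, p ≤ n →
      Real.cos ((2:ℝ)^(-(p:ℤ)) * m) ≠ 0 ∧ Real.cos ((2:ℝ)^(-(p:ℤ)) * r) ≠ 0 ∧
      Real.cos ((2:ℝ)^(-1-(p:ℤ)) * m) ≠ 0 ∧ Real.cos ((2:ℝ)^(-1-(p:ℤ)) * r) ≠ 0)
    (htm : Real.tan m ≠ 0) (htr : Real.tan r ≠ 0)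
    (htnm : Real.tan ((2:ℝ)^(-1-(n:ℤ)) * m) ≠ 0)
    (htnr : Real.tan ((2:ℝ)^(-1-(n:ℤ)) * r) ≠ 0)
    (hcm : Real.cos m ≠ 0) (hcr : Real.cos r ≠ 0)
    (hcnm : Real.cos ((2:ℝ)^(-1-(n:ℤ)) * m) ≠ 0)
    (hcnr : Real.cos ((2:ℝ)^(-1-(n:ℤ)) * r) ≠ 0) :
    ∏ p ∈ Finset.range (n+1),
      (Real.cos ((2:ℝ)^(-(p:ℤ)) * m) / Real.cos ((2:ℝ)^(-(p:ℤ)) * r)) *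
        (Real.cos ((2:ℝ)^(-1-(p:ℤ)) * r) / Real.cos ((2:ℝ)^(-1-(p:ℤ)) * m))^2
    = Real.tan ((2:ℝ)^(-1-(n:ℤ)) * m) * Real.tan r /
        (Real.tan m * Real.tan ((2:ℝ)^(-1-(n:ℤ)) * r)) := by
  have hsm : Real.sin ((2:ℝ)^(-1-(n:ℤ)) * m) ≠ 0 := by
    intro h; apply htnm; rw [Real.tan_eq_sin_div_cos, h, zero_div]
  have hsr : Real.sin ((2:ℝ)^(-1-(n:ℤ)) * r) ≠ 0 := by
    intro h; apply htnr; rw [Real.tan_eq_sin_div_cos, h, zero_div]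
  have key : ∀ p ∈ Finset.range (n+1),
      (Real.cos ((2:ℝ)^(-(p:ℤ)) * m) / Real.cos ((2:ℝ)^(-(p:ℤ)) * r)) *
        (Real.cos ((2:ℝ)^(-1-(p:ℤ)) * r) / Real.cos ((2:ℝ)^(-1-(p:ℤ)) * m))^2
      = (Real.cos ((2:ℝ)^(-(p:ℤ)) * m) / (Real.cos ((2:ℝ)^(-1-(p:ℤ)) * m))^2) /
        (Real.cos ((2:ℝ)^(-(p:ℤ)) * r) / (Real.cos ((2:ℝ)^(-1-(p:ℤ)) * r))^2) := by
    intro p hp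
    have hp' : p ≤ n := Nat.lt_succ_iff.mp (Finset.mem_range.mp hp)
    obtain ⟨h1, h2, h3, h4⟩ := hc p hp'
    field_simp
  rw [Finset.prod_congr rfl key, Finset.prod_div_distrib,
    aux_prod n m (fun p hp => ⟨(hc p hp).1, (hc p hp).2.2.1⟩) hsm,
    aux_prod n r (fun p hp => ⟨(hc p hp).2.1, (hc p hp).2.2.2⟩) hsr]
  have h2n : (2:ℝ)^(n+1) ≠ 0 := by positivity
  field_simp
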